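/- Let ρ be a self-avoiding walk on ℤ² of length ℓ that attains its minimal height at ρ₀ and its maximal height at ρ_ℓ. For h ∈ ℕ, if (j₁,k₁) and (j₂,k₂) are two distinct right-detachable ρ-adjacencies, each of gap h (i.e. k₁ − j₁ = k₂ − j₂ = h), then |k₂ − k₁| ≥ h. -/

import Mathlib

/-- A nearest-neighbour step on `ℤ²`. -/
def IsStep (p q : ℤ × ℤ) : Prop := |q.1 - p.1| + |q.2 - p.2| = 1

/-- A self-avoiding walk of length `m` on `ℤ²` (with arbitrary starting point). -/
def IsSAWalk (m : ℕ) (γ : ℕ → ℤ × ℤ) : Prop :=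
  (∀ i < m, IsStep (γ i) (γ (i + 1))) ∧ (∀ i ≤ m, ∀ j ≤ m, γ i = γ j → i = j)

/-- A self-avoiding polygon of length `m` on `ℤ²`, as a closed walk. -/
def IsSAPolygon (m : ℕ) (q : ℕ → ℤ × ℤ) : Prop :=
  0 < m ∧ (∀ i < m, IsStep (q i) (q (i + 1))) ∧ q m = q 0 ∧
  (∀ i < m, ∀ j < m, q i = q j → i = j)

/-- The vertex set of a walk of length `m`. -/
def wVerts (m : ℕ) (γ : ℕ → ℤ × ℤ) : Set (ℤ × ℤ) := {p | ∃ i ≤ m, γ i = p}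

/-- The edge set of a walk of length `m`. -/
def wEdges (m : ℕ) (γ : ℕ → ℤ × ℤ) : Set (Sym2 (ℤ × ℤ)) :=
  {e | ∃ i < m, e = s(γ i, γ (i + 1))}

/-- `(j, k)` is a right-detachable `ρ`-adjacency for a self-avoiding walk `ρ` of
length `ℓ`: `{ρ j, ρ k}` is a vertically oriented unit edge; the horizontal edges of
the plaquette `P` having this edge as its right border belong to `ρ` while its
vertical edges do not; the modification `ρ Δ P` (removing `P`'s horizontal edges,
inserting its vertical ones) is a disjoint union of a walk `ρ'` and a polygon `Q`;
and every translate of `Q` directly to the right is disjoint from `ρ'`. -/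
def RightDetachable (ℓ : ℕ) (ρ : ℕ → ℤ × ℤ) (j k : ℕ) : Prop :=
  j < k ∧ k ≤ ℓ ∧
  ∃ a : ℤ × ℤ,
    ({ρ j, ρ k} : Set (ℤ × ℤ)) = {a, a + (0, 1)} ∧
    s(a + (-1, 0), a) ∈ wEdges ℓ ρ ∧
    s(a + (-1, 1), a + (0, 1)) ∈ wEdges ℓ ρ ∧
    s(a + (-1, 0), a + (-1, 1)) ∉ wEdges ℓ ρ ∧
    s(a, a + (0, 1)) ∉ wEdges ℓ ρ ∧
    ∃ (m : ℕ) (ρ' : ℕ → ℤ × ℤ) (m' : ℕ) (Q : ℕ → ℤ × ℤ),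
      IsSAWalk m ρ' ∧ IsSAPolygon m' Q ∧
      Disjoint (wVerts m ρ') (wVerts m' Q) ∧
      (wEdges ℓ ρ \ {s(a + (-1, 0), a), s(a + (-1, 1), a + (0, 1))}) ∪
          {s(a + (-1, 0), a + (-1, 1)), s(a, a + (0, 1))}
        = wEdges m ρ' ∪ wEdges m' Q ∧
      ∀ t : ℕ, Disjoint ((fun p : ℤ × ℤ => p + ((t : ℤ), 0)) '' wVerts m' Q)
        (wVerts m ρ')

namespace RDAux

lemma isStep_dy {p q : ℤ × ℤ} (h : IsStep p q) : |q.2 - p.2| ≤ 1 := by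
  have := abs_nonneg (q.1 - p.1); unfold IsStep at h; linarith

lemma not_isStep_self (p : ℤ × ℤ) : ¬ IsStep p p := by
  unfold IsStep; simp

lemma mem_wVerts {n : ℕ} {γ : ℕ → ℤ × ℤ} {x : ℤ × ℤ} :
    x ∈ wVerts n γ ↔ ∃ i ≤ n, γ i = x := Iff.rfl

lemma mem_wEdges {n : ℕ} {γ : ℕ → ℤ × ℤ} {e : Sym2 (ℤ × ℤ)} :
    e ∈ wEdges n γ ↔ ∃ i < n, e = s(γ i, γ (i + 1)) := Iff.rfl

lemma wVerts_eq (n : ℕ) (γ : ℕ → ℤ × ℤ) : wVerts n γ = γ '' Set.Iic n := by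
  ext x; constructor
  · rintro ⟨i, hi, rfl⟩; exact ⟨i, hi, rfl⟩
  · rintro ⟨i, hi, rfl⟩; exact ⟨i, hi, rfl⟩

lemma wEdges_eq (n : ℕ) (γ : ℕ → ℤ × ℤ) :
    wEdges n γ = (fun i => s(γ i, γ (i + 1))) '' Set.Iio n := by
  ext e; constructor
  · rintro ⟨i, hi, rfl⟩; exact ⟨i, hi, rfl⟩
  · rintro ⟨i, hi, rfl⟩; exact ⟨i, hi, rfl⟩

lemma finite_wVerts (n : ℕ) (γ : ℕ → ℤ × ℤ) : (wVerts n γ).Finite := by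
  rw [wVerts_eq]; exact (Set.finite_Iic n).image _

lemma finite_wEdges (n : ℕ) (γ : ℕ → ℤ × ℤ) : (wEdges n γ).Finite := by
  rw [wEdges_eq]; exact (Set.finite_Iio n).image _

lemma edge_inj {n : ℕ} {γ : ℕ → ℤ × ℤ}
    (hinj : ∀ i ≤ n, ∀ j ≤ n, γ i = γ j → i = j) {i i' : ℕ} (hi : i < n) (hi' : i' < n)
    (he : s(γ i, γ (i + 1)) = s(γ i', γ (i' + 1))) : i = i' := by
  rcases Sym2.eq_iff.mp he with ⟨h1, _⟩ | ⟨h1, h2⟩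
  · exact hinj i hi.le i' hi'.le h1
  · have e1 : i = i' + 1 := hinj i hi.le (i' + 1) hi' h1
    have e2 : i + 1 = i' := hinj (i + 1) hi i' hi'.le h2
    omega

lemma ncard_wVerts {n : ℕ} {γ : ℕ → ℤ × ℤ}
    (hinj : ∀ i ≤ n, ∀ j ≤ n, γ i = γ j → i = j) : (wVerts n γ).ncard = n + 1 := by
  rw [wVerts_eq, Set.ncard_image_of_injOn, ← Finset.coe_Iic, Set.ncard_coe_finset, Nat.card_Iic]
  intro i hi j hj hij
  exact hinj i hi j hj hij

lemma ncard_wEdges {n : ℕ} {γ : ℕ → ℤ × ℤ}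
    (hinj : ∀ i ≤ n, ∀ j ≤ n, γ i = γ j → i = j) : (wEdges n γ).ncard = n := by
  rw [wEdges_eq, Set.ncard_image_of_injOn, ← Finset.coe_Iio, Set.ncard_coe_finset, Nat.card_Iio]
  intro i hi j hj hij
  exact edge_inj hinj hi hj hij

lemma endpoint_mem {n : ℕ} {γ : ℕ → ℤ × ℤ} {x y : ℤ × ℤ}
    (h : s(x, y) ∈ wEdges n γ) : x ∈ wVerts n γ ∧ y ∈ wVerts n γ := by
  obtain ⟨i, hi, he⟩ := h
  rcases Sym2.eq_iff.mp he with ⟨h1, h2⟩ | ⟨h1, h2⟩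
  · exact ⟨⟨i, hi.le, h1.symm⟩, ⟨i + 1, hi, h2.symm⟩⟩
  · exact ⟨⟨i + 1, hi, h1.symm⟩, ⟨i, hi.le, h2.symm⟩⟩

/-- Discrete intermediate value theorem for the second coordinate along a walk. -/
lemma ivt {ℓ : ℕ} {ρ : ℕ → ℤ × ℤ} (hst : ∀ i < ℓ, IsStep (ρ i) (ρ (i + 1))) :
    ∀ (d i₁ : ℕ), i₁ + d ≤ ℓ → ∀ r : ℤ,
      (((ρ i₁).2 ≤ r ∧ r ≤ (ρ (i₁ + d)).2) ∨ ((ρ (i₁ + d)).2 ≤ r ∧ r ≤ (ρ i₁).2)) →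
      ∃ t, i₁ ≤ t ∧ t ≤ i₁ + d ∧ (ρ t).2 = r := by
  intro d
  induction d with
  | zero =>
    intro i₁ _ r hr
    rw [Nat.add_zero] at hr ⊢
    exact ⟨i₁, le_refl _, le_refl _, by omega⟩
  | succ d ih =>
    intro i₁ hd r hr
    have hstep : IsStep (ρ (i₁ + d)) (ρ (i₁ + d + 1)) := hst _ (by omega)
    have hdy : |(ρ (i₁ + d + 1)).2 - (ρ (i₁ + d)).2| ≤ 1 := isStep_dy hstep
    rw [abs_le] at hdy
    have hre : i₁ + (d + 1) = i₁ + d + 1 := by omega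
    rw [hre] at hr hd
    by_cases hcase : ((ρ i₁).2 ≤ r ∧ r ≤ (ρ (i₁ + d)).2) ∨ ((ρ (i₁ + d)).2 ≤ r ∧ r ≤ (ρ i₁).2)
    · obtain ⟨t, h1, h2, h3⟩ := ih i₁ (by omega) r hcase
      exact ⟨t, h1, by omega, h3⟩
    · push_neg at hcase
      refine ⟨i₁ + d + 1, by omega, by omega, by omega⟩

lemma partICore (ℓ j k m m' : ℕ) (ρ ρ' Q : ℕ → ℤ × ℤ)
    (hρ : IsSAWalk ℓ ρ) (hw : IsSAWalk m ρ') (hpoly : IsSAPolygon m' Q)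
    (hjk : j < k) (hkl : k ≤ ℓ)
    (hx : (ρ k).1 = (ρ j).1)
    (hy : (ρ k).2 = (ρ j).2 + 1 ∨ (ρ k).2 = (ρ j).2 - 1)
    (hA : s(ρ j + (-1, 0), ρ j) ∈ wEdges ℓ ρ)
    (hB : s(ρ k + (-1, 0), ρ k) ∈ wEdges ℓ ρ)
    (hC : s(ρ j + (-1, 0), ρ k + (-1, 0)) ∉ wEdges ℓ ρ)
    (hD : s(ρ j, ρ k) ∉ wEdges ℓ ρ)
    (hdisj : Disjoint (wVerts m ρ') (wVerts m' Q))
    (hEq : (wEdges ℓ ρ \ {s(ρ j + (-1, 0), ρ j), s(ρ k + (-1, 0), ρ k)}) ∪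
        {s(ρ j + (-1, 0), ρ k + (-1, 0)), s(ρ j, ρ k)} = wEdges m ρ' ∪ wEdges m' Q)
    (htr : ∀ t : ℕ, Disjoint ((fun p : ℤ × ℤ => p + ((t : ℤ), 0)) '' wVerts m' Q)
      (wVerts m ρ')) :
    1 ≤ j ∧ k + 1 ≤ ℓ ∧ ρ (j - 1) = ρ j + (-1, 0) ∧ ρ (k + 1) = ρ k + (-1, 0) ∧
      ∀ u v : ℕ, j ≤ u → u ≤ k → v ≤ ℓ → (v < j ∨ k < v) → (ρ v).2 = (ρ u).2 →
        (ρ v).1 < (ρ u).1 := by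
  obtain ⟨hstep, hinj⟩ := hρ
  set w₀ := ρ j + (-1, 0) with hw₀
  set w₁ := ρ k + (-1, 0) with hw₁
  have c1 : w₀.1 = (ρ j).1 - 1 := by simp [hw₀]; ring
  have c2 : w₀.2 = (ρ j).2 := by simp [hw₀]
  have c3 : w₁.1 = (ρ k).1 - 1 := by simp [hw₁]; ring
  have c4 : w₁.2 = (ρ k).2 := by simp [hw₁]
  have hyne : (ρ k).2 ≠ (ρ j).2 := by rcases hy with h | h <;> omega
  have dJK : ρ j ≠ ρ k := by intro hE; rw [Prod.ext_iff] at hE; omega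
  have dW01 : w₀ ≠ w₁ := by intro hE; rw [Prod.ext_iff] at hE; omega
  have dW0J : w₀ ≠ ρ j := by intro hE; rw [Prod.ext_iff] at hE; omega
  have dW0K : w₀ ≠ ρ k := by intro hE; rw [Prod.ext_iff] at hE; omega
  have dW1J : w₁ ≠ ρ j := by intro hE; rw [Prod.ext_iff] at hE; omega
  have dW1K : w₁ ≠ ρ k := by intro hE; rw [Prod.ext_iff] at hE; omega
  have dAB : s(w₀, ρ j) ≠ s(w₁, ρ k) := by
    intro hE
    rcases Sym2.eq_iff.mp hE with ⟨h1, _⟩ | ⟨h1, _⟩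
    · exact dW01 h1
    · exact dW0K h1
  have dfAB : s(w₀, w₁) ≠ s(ρ j, ρ k) := by
    intro hE
    rcases Sym2.eq_iff.mp hE with ⟨h1, _⟩ | ⟨h1, _⟩
    · exact dW0J h1
    · exact dW0K h1
  have dAfA : s(w₀, ρ j) ≠ s(w₀, w₁) := by
    intro hE
    rcases Sym2.eq_iff.mp hE with ⟨_, h2⟩ | ⟨h1, _⟩
    · exact dW1J h2.symm
    · exact dW01 h1
  have dAfB : s(w₀, ρ j) ≠ s(ρ j, ρ k) := by
    intro hE
    rcases Sym2.eq_iff.mp hE with ⟨h1, _⟩ | ⟨h1, _⟩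
    · exact dW0J h1
    · exact dW0K h1
  have dBfA : s(w₁, ρ k) ≠ s(w₀, w₁) := by
    intro hE
    rcases Sym2.eq_iff.mp hE with ⟨h1, _⟩ | ⟨_, h2⟩
    · exact dW01 h1.symm
    · exact dW0K h2.symm
  have dBfB : s(w₁, ρ k) ≠ s(ρ j, ρ k) := by
    intro hE
    rcases Sym2.eq_iff.mp hE with ⟨h1, _⟩ | ⟨h1, h2⟩
    · exact dW1J h1
    · exact dW1K h1
  have hjk2 : j + 2 ≤ k := by
    by_contra hcon
    have hk1 : k = j + 1 := by omega
    exact hD ⟨j, by omega, by rw [hk1]⟩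
  have hl2 : 2 ≤ ℓ := by omega
  -- membership helpers
  have memRHS_fA : s(w₀, w₁) ∈ wEdges m ρ' ∪ wEdges m' Q := by
    rw [← hEq]; right; exact Set.mem_insert _ _
  have memRHS_fB : s(ρ j, ρ k) ∈ wEdges m ρ' ∪ wEdges m' Q := by
    rw [← hEq]; right; exact Set.mem_insert_of_mem _ rfl
  have memRHS_step : ∀ t, t < ℓ → s(ρ t, ρ (t + 1)) ≠ s(w₀, ρ j) →
      s(ρ t, ρ (t + 1)) ≠ s(w₁, ρ k) →
      s(ρ t, ρ (t + 1)) ∈ wEdges m ρ' ∪ wEdges m' Q := by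
    intro t ht h1 h2
    rw [← hEq]; left
    refine ⟨⟨t, ht, rfl⟩, ?_⟩
    intro hmem
    rcases hmem with h | h
    · exact h1 h
    · exact h2 h
  have classE : ∀ x y : ℤ × ℤ, s(x, y) ∈ wEdges m ρ' ∪ wEdges m' Q →
      (x ∈ wVerts m' Q ↔ y ∈ wVerts m' Q) := by
    rintro x y (h | h)
    · obtain ⟨hx', hy'⟩ := endpoint_mem h
      exact iff_of_false (fun hq => Set.disjoint_left.mp hdisj hx' hq)
        (fun hq => Set.disjoint_left.mp hdisj hy' hq)
    · obtain ⟨hx', hy'⟩ := endpoint_mem h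
      exact iff_of_true hx' hy'
  have coverE : ∀ x y : ℤ × ℤ, s(x, y) ∈ wEdges m ρ' ∪ wEdges m' Q →
      x ∈ wVerts m ρ' ∪ wVerts m' Q ∧ y ∈ wVerts m ρ' ∪ wVerts m' Q := by
    rintro x y (h | h)
    · obtain ⟨hx', hy'⟩ := endpoint_mem h
      exact ⟨Or.inl hx', Or.inl hy'⟩
    · obtain ⟨hx', hy'⟩ := endpoint_mem h
      exact ⟨Or.inr hx', Or.inr hy'⟩
  have endρ : ∀ x y : ℤ × ℤ, s(x, y) ∈ wEdges m ρ' ∪ wEdges m' Q →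
      x ∈ wVerts ℓ ρ ∧ y ∈ wVerts ℓ ρ := by
    intro x y hmem
    rw [← hEq] at hmem
    have hw0v : w₀ ∈ wVerts ℓ ρ := (endpoint_mem hA).1
    have hw1v : w₁ ∈ wVerts ℓ ρ := (endpoint_mem hB).1
    have hjv : ρ j ∈ wVerts ℓ ρ := ⟨j, by omega, rfl⟩
    have hkv : ρ k ∈ wVerts ℓ ρ := ⟨k, by omega, rfl⟩
    rcases hmem with ⟨hmem, -⟩ | hmem
    · exact endpoint_mem hmem
    · rcases hmem with h | h
      · rcases Sym2.eq_iff.mp h with ⟨h1, h2⟩ | ⟨h1, h2⟩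
        · rw [h1, h2]; exact ⟨hw0v, hw1v⟩
        · rw [h1, h2]; exact ⟨hw1v, hw0v⟩
      · rcases Sym2.eq_iff.mp h with ⟨h1, h2⟩ | ⟨h1, h2⟩
        · rw [h1, h2]; exact ⟨hjv, hkv⟩
        · rw [h1, h2]; exact ⟨hkv, hjv⟩
  -- counting: the modified edge set has ℓ elements
  have finWE : (wEdges ℓ ρ).Finite := finite_wEdges ℓ ρ
  have pairsub : ({s(w₀, ρ j), s(w₁, ρ k)} : Set (Sym2 (ℤ × ℤ))) ⊆ wEdges ℓ ρ := by
    intro e he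
    rcases he with rfl | he
    · exact hA
    · rw [Set.mem_singleton_iff] at he; rw [he]; exact hB
  have cardDiff : (wEdges ℓ ρ \ {s(w₀, ρ j), s(w₁, ρ k)}).ncard = ℓ - 2 := by
    rw [Set.ncard_diff pairsub (finWE.subset pairsub), ncard_wEdges hinj,
      Set.ncard_pair dAB]
  have disjf : Disjoint (wEdges ℓ ρ \ {s(w₀, ρ j), s(w₁, ρ k)})
      {s(w₀, w₁), s(ρ j, ρ k)} := by
    rw [Set.disjoint_right]
    intro e he hmem
    rcases he with rfl | he
    · exact hC hmem.1
    · rw [Set.mem_singleton_iff] at he; subst he; exact hD hmem.1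
  have cardEL : ((wEdges ℓ ρ \ {s(w₀, ρ j), s(w₁, ρ k)}) ∪ {s(w₀, w₁), s(ρ j, ρ k)}).ncard
      = ℓ := by
    rw [Set.ncard_union_eq disjf finWE.diff ((Set.finite_singleton _).insert _),
      cardDiff, Set.ncard_pair dfAB]
    omega
  have disjE : Disjoint (wEdges m ρ') (wEdges m' Q) := by
    rw [Set.disjoint_left]
    rintro e ⟨i, hi, rfl⟩ hq
    exact Set.disjoint_left.mp hdisj ⟨i, hi.le, rfl⟩ (endpoint_mem hq).1
  have cardsum : m + (wEdges m' Q).ncard = ℓ := by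
    have hh := cardEL
    rw [hEq, Set.ncard_union_eq disjE (finite_wEdges _ _) (finite_wEdges _ _),
      ncard_wEdges hw.2] at hh
    exact hh
  have hm'3 : 3 ≤ m' := by
    have h0 := hpoly.1
    rcases Nat.lt_or_ge m' 3 with h3 | h3
    · exfalso
      have hm'12 : m' = 1 ∨ m' = 2 := by omega
      rcases hm'12 with h1 | h2
      · have hs := hpoly.2.1 0 (by omega)
        have hq := hpoly.2.2.1
        rw [h1] at hq
        rw [hq] at hs
        exact not_isStep_self _ hs
      · subst h2
        have hQ01 : Q 0 ≠ Q 1 := by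
          intro hE
          have := hpoly.2.2.2 0 (by omega) 1 (by omega) hE
          omega
        have hedges : wEdges 2 Q = {s(Q 0, Q 1)} := by
          ext e
          constructor
          · rintro ⟨i, hi, rfl⟩
            interval_cases i
            · rfl
            · have h2 : Q (1 + 1) = Q 0 := hpoly.2.2.1
              rw [Set.mem_singleton_iff, h2]
              exact Sym2.eq_swap
          · intro he
            rw [Set.mem_singleton_iff] at he
            exact ⟨0, by omega, he⟩
        have hcard2 : (wEdges 2 Q).ncard = 1 := by
          rw [hedges]; exact Set.ncard_singleton _
        have hm : m + 1 = ℓ := by rw [hcard2] at cardsum; omega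
        have hVsub : wVerts m ρ' ⊆ wVerts ℓ ρ := by
          rintro x ⟨i, hi, rfl⟩
          rcases Nat.lt_or_ge i m with him | him
          · exact (endρ _ _ (Or.inl ⟨i, him, rfl⟩)).1
          · have him' : i = m := by omega
            have hm1 : 1 ≤ m := by omega
            have hmem : s(ρ' (m - 1), ρ' (m - 1 + 1)) ∈ wEdges m ρ' := ⟨m - 1, by omega, rfl⟩
            have h2 := (endρ _ _ (Or.inl hmem)).2
            rw [show m - 1 + 1 = m by omega] at h2
            rw [him']
            exact h2
        have hQsub : wVerts 2 Q ⊆ wVerts ℓ ρ := by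
          rintro x ⟨i, hi, rfl⟩
          interval_cases i
          · exact (endρ _ _ (Or.inr ⟨0, by omega, rfl⟩)).1
          · exact (endρ _ _ (Or.inr ⟨0, by omega, rfl⟩)).2
          · have h2 : Q (1 + 1) = Q 0 := hpoly.2.2.1
            rw [h2]
            exact (endρ _ _ (Or.inr ⟨0, by omega, rfl⟩)).1
        have hverts2 : wVerts 2 Q = {Q 0, Q 1} := by
          ext x
          constructor
          · rintro ⟨i, hi, rfl⟩
            interval_cases i
            · exact Or.inl rfl
            · exact Or.inr rfl
            · have h2 : Q (1 + 1) = Q 0 := hpoly.2.2.1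
              rw [h2]; exact Or.inl rfl
          · intro hx
            rcases hx with rfl | hx
            · exact ⟨0, by omega, rfl⟩
            · rw [Set.mem_singleton_iff] at hx; rw [hx]; exact ⟨1, by omega, rfl⟩
        have hcardU : (wVerts m ρ' ∪ wVerts 2 Q).ncard = (m + 1) + 2 := by
          rw [Set.ncard_union_eq hdisj (finite_wVerts _ _) (finite_wVerts _ _),
            ncard_wVerts hw.2, hverts2, Set.ncard_pair hQ01]
        have hle := Set.ncard_le_ncard (Set.union_subset hVsub hQsub) (finite_wVerts ℓ ρ)
        rw [hcardU, ncard_wVerts hinj] at hle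
        omega
    · exact h3
  -- every polygon vertex lies on two distinct polygon edges
  have hqinj := hpoly.2.2.2
  have hqwrap := hpoly.2.2.1
  have twoedges : ∀ x : ℤ × ℤ, x ∈ wVerts m' Q → ∃ E1 E2 : Sym2 (ℤ × ℤ),
      E1 ∈ wEdges m' Q ∧ E2 ∈ wEdges m' Q ∧ E1 ≠ E2 ∧ x ∈ E1 ∧ x ∈ E2 := by
    rintro x ⟨i0, hi0, rfl⟩
    obtain ⟨i, hilt, hQi⟩ : ∃ i, i < m' ∧ Q i = Q i0 := by
      rcases Nat.lt_or_ge i0 m' with hcase | hcase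
      · exact ⟨i0, hcase, rfl⟩
      · have hi0' : i0 = m' := by omega
        subst hi0'
        exact ⟨0, by omega, hqwrap.symm⟩
    obtain ⟨ip, hiplt, hipn⟩ : ∃ ip, ip < m' ∧ Q (ip + 1) = Q i := by
      rcases Nat.eq_zero_or_pos i with h0 | h0
      · subst h0
        refine ⟨m' - 1, by omega, ?_⟩
        rw [show m' - 1 + 1 = m' by omega]
        exact hqwrap
      · exact ⟨i - 1, by omega, by rw [show i - 1 + 1 = i by omega]⟩
    refine ⟨s(Q ip, Q (ip + 1)), s(Q i, Q (i + 1)), ⟨ip, hiplt, rfl⟩, ⟨i, hilt, rfl⟩,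
      ?_, ?_, ?_⟩
    · intro hE
      rcases Sym2.eq_iff.mp hE with ⟨h1, h2⟩ | ⟨h1, h2⟩
      · have hipi : ip = i := hqinj ip hiplt i hilt h1
        rw [hipi] at hipn
        rcases Nat.lt_or_ge (i + 1) m' with hlt | hge
        · have := hqinj (i + 1) hlt i hilt hipn; omega
        · have hieq : i + 1 = m' := by omega
          have h3 : Q m' = Q i := by rw [← hieq]; exact hipn
          rw [hqwrap] at h3
          have := hqinj 0 (by omega) i hilt h3
          omega
      · rcases Nat.lt_or_ge (i + 1) m' with hlt | hge
        · have hipi : ip = i + 1 := hqinj ip hiplt (i + 1) hlt h1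
          subst hipi
          rcases Nat.lt_or_ge (i + 1 + 1) m' with hlt2 | hge2
          · have := hqinj (i + 1 + 1) hlt2 i hilt hipn; omega
          · have hieq : i + 1 + 1 = m' := by omega
            have h3 : Q m' = Q i := by rw [← hieq]; exact hipn
            rw [hqwrap] at h3
            have := hqinj 0 (by omega) i hilt h3
            omega
        · have hieq : i + 1 = m' := by omega
          have h3 : Q ip = Q 0 := by rw [h1, ← hqwrap, ← hieq]
          have hip0 : ip = 0 := hqinj ip hiplt 0 (by omega) h3
          rw [hip0] at hipn
          have h4 : (1 : ℕ) = i := hqinj 1 (by omega) i hilt hipn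
          omega
    · have hxx : Q i0 = Q (ip + 1) := by rw [hipn, hQi]
      rw [hxx]
      exact Sym2.mem_mk_right _ _
    · have hxx : Q i0 = Q i := hQi.symm
      rw [hxx]
      exact Sym2.mem_mk_left _ _
  -- the removed edges are not edges of the modification
  have hEAnot : s(w₀, ρ j) ∉ wEdges m ρ' ∪ wEdges m' Q := by
    rw [← hEq]
    rintro (⟨-, hmem⟩ | hmem)
    · exact hmem (Or.inl rfl)
    · rcases hmem with h | h
      · exact dAfA h
      · rw [Set.mem_singleton_iff] at h; exact dAfB h
  have hEBnot : s(w₁, ρ k) ∉ wEdges m ρ' ∪ wEdges m' Q := by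
    rw [← hEq]
    rintro (⟨-, hmem⟩ | hmem)
    · exact hmem (Or.inr rfl)
    · rcases hmem with h | h
      · exact dBfA h
      · rw [Set.mem_singleton_iff] at h; exact dBfB h
  -- classification of modified edges containing a given point
  have cat : ∀ x : ℤ × ℤ, ∀ e ∈ wEdges m ρ' ∪ wEdges m' Q, x ∈ e →
      (∃ i < ℓ, e = s(ρ i, ρ (i + 1)) ∧ (x = ρ i ∨ x = ρ (i + 1))
        ∧ s(ρ i, ρ (i + 1)) ∈ wEdges m ρ' ∪ wEdges m' Q)
      ∨ e = s(w₀, w₁) ∨ e = s(ρ j, ρ k) := by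
    intro x e he hxe
    have he' := he
    rw [← hEq] at he'
    rcases he' with ⟨⟨i, hi, rfl⟩, -⟩ | he'
    · left
      refine ⟨i, hi, rfl, ?_, he⟩
      rwa [Sym2.mem_iff] at hxe
    · rcases he' with h | h
      · right; left; exact h
      · rw [Set.mem_singleton_iff] at h; right; right; exact h
  have E_AB : ∀ x : ℤ × ℤ, x ∈ s(w₀, w₁) → x ∈ s(ρ j, ρ k) → False := by
    intro x h1 h2
    rw [Sym2.mem_iff] at h1 h2
    rcases h1 with rfl | rfl <;> rcases h2 with h2 | h2
    · exact dW0J h2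
    · exact dW0K h2
    · exact dW1J h2
    · exact dW1K h2
  -- uniqueness of the modified edge at ρ 0
  have I1 : ρ 0 = w₀ → s(w₀, ρ j) = s(ρ 0, ρ 1) := by
    intro h0
    obtain ⟨i, hi, he⟩ := hA
    rcases Sym2.eq_iff.mp he with ⟨h1, h2⟩ | ⟨h1, h2⟩
    · have hi0 : i = 0 := by
        have := hinj i hi.le 0 (by omega) (by rw [← h1, ← h0])
        omega
      rw [he, hi0]
    · exfalso
      have := hinj (i + 1) hi 0 (by omega) (by rw [← h1, ← h0])
      omega
  have I2 : ρ 0 = w₁ → s(w₁, ρ k) = s(ρ 0, ρ 1) := by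
    intro h0
    obtain ⟨i, hi, he⟩ := hB
    rcases Sym2.eq_iff.mp he with ⟨h1, h2⟩ | ⟨h1, h2⟩
    · have hi0 : i = 0 := by
        have := hinj i hi.le 0 (by omega) (by rw [← h1, ← h0])
        omega
      rw [he, hi0]
    · exfalso
      have := hinj (i + 1) hi 0 (by omega) (by rw [← h1, ← h0])
      omega
  have I3 : j = 0 → s(w₀, ρ j) = s(ρ 0, ρ 1) := by
    intro h0
    obtain ⟨i, hi, he⟩ := hA
    rcases Sym2.eq_iff.mp he with ⟨h1, h2⟩ | ⟨h1, h2⟩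
    · exfalso
      have := hinj j (by omega) (i + 1) hi h2
      omega
    · have hi0 : i = 0 := by
        have := hinj j (by omega) i hi.le h2
        omega
      rw [he, hi0]
  have uniq0 : ∀ e ∈ wEdges m ρ' ∪ wEdges m' Q, ρ 0 ∈ e →
      ∀ e' ∈ wEdges m ρ' ∪ wEdges m' Q, ρ 0 ∈ e' → e = e' := by
    have stepcase : ∀ i < ℓ, (ρ 0 = ρ i ∨ ρ 0 = ρ (i + 1)) → i = 0 := by
      intro i hi hcase
      rcases hcase with hcc | hcc
      · have := hinj 0 (by omega) i hi.le hcc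
        omega
      · have := hinj 0 (by omega) (i + 1) hi hcc
        omega
    have E_fA : s(ρ 0, ρ 1) ∈ wEdges m ρ' ∪ wEdges m' Q → ρ 0 ∈ s(w₀, w₁) → False := by
      intro hstepmem hmem
      rw [Sym2.mem_iff] at hmem
      rcases hmem with h0 | h0
      · rw [← I1 h0] at hstepmem
        exact hEAnot hstepmem
      · rw [← I2 h0] at hstepmem
        exact hEBnot hstepmem
    have E_fB : s(ρ 0, ρ 1) ∈ wEdges m ρ' ∪ wEdges m' Q → ρ 0 ∈ s(ρ j, ρ k) → False := by
      intro hstepmem hmem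
      rw [Sym2.mem_iff] at hmem
      rcases hmem with h0 | h0
      · have hj0 : j = 0 := by
          have := hinj 0 (by omega) j (by omega) h0
          omega
        rw [← I3 hj0] at hstepmem
        exact hEAnot hstepmem
      · have : k = 0 := by
          have := hinj 0 (by omega) k (by omega) h0
          omega
        omega
    intro e he hxe e' he' hxe'
    rcases cat (ρ 0) e he hxe with ⟨i, hi, rfl, hm, hsm⟩ | rfl | rfl <;>
      rcases cat (ρ 0) e' he' hxe' with ⟨i', hi', rfl, hm', hsm'⟩ | rfl | rfl
    · have e1 : i = 0 := stepcase i hi hm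
      have e2 : i' = 0 := stepcase i' hi' hm'
      rw [e1, e2]
    · exfalso
      have e1 : i = 0 := stepcase i hi hm
      rw [e1] at hsm
      exact E_fA hsm hxe'
    · exfalso
      have e1 : i = 0 := stepcase i hi hm
      rw [e1] at hsm
      exact E_fB hsm hxe'
    · exfalso
      have e1 : i' = 0 := stepcase i' hi' hm'
      rw [e1] at hsm'
      exact E_fA hsm' hxe
    · rfl
    · exact absurd hxe' (fun hh => E_AB _ hxe hh)
    · exfalso
      have e1 : i' = 0 := stepcase i' hi' hm'
      rw [e1] at hsm'
      exact E_fB hsm' hxe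
    · exact absurd hxe (fun hh => E_AB _ hxe' hh)
    · rfl
  have notVQ0 : ρ 0 ∉ wVerts m' Q := by
    intro hmem
    obtain ⟨E1, E2, hE1, hE2, hne, hx1, hx2⟩ := twoedges _ hmem
    exact hne (uniq0 E1 (Or.inr hE1) hx1 E2 (Or.inr hE2) hx2)
  -- uniqueness of the modified edge at ρ ℓ
  have I1l : ρ ℓ = w₀ → s(w₀, ρ j) = s(ρ (ℓ - 1), ρ (ℓ - 1 + 1)) := by
    intro h0
    obtain ⟨i, hi, he⟩ := hA
    rcases Sym2.eq_iff.mp he with ⟨h1, h2⟩ | ⟨h1, h2⟩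
    · exfalso
      have := hinj ℓ (by omega) i hi.le (by rw [h0, h1])
      omega
    · have hi0 : i = ℓ - 1 := by
        have := hinj ℓ (by omega) (i + 1) hi (by rw [h0, h1])
        omega
      rw [he, hi0]
  have I2l : ρ ℓ = w₁ → s(w₁, ρ k) = s(ρ (ℓ - 1), ρ (ℓ - 1 + 1)) := by
    intro h0
    obtain ⟨i, hi, he⟩ := hB
    rcases Sym2.eq_iff.mp he with ⟨h1, h2⟩ | ⟨h1, h2⟩
    · exfalso
      have := hinj ℓ (by omega) i hi.le (by rw [h0, h1])
      omega
    · have hi0 : i = ℓ - 1 := by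
        have := hinj ℓ (by omega) (i + 1) hi (by rw [h0, h1])
        omega
      rw [he, hi0]
  have I3l : k = ℓ → s(w₁, ρ k) = s(ρ (ℓ - 1), ρ (ℓ - 1 + 1)) := by
    intro h0
    obtain ⟨i, hi, he⟩ := hB
    rcases Sym2.eq_iff.mp he with ⟨h1, h2⟩ | ⟨h1, h2⟩
    · have hi0 : i = ℓ - 1 := by
        have := hinj k (by omega) (i + 1) hi h2
        omega
      rw [he, hi0]
    · exfalso
      have := hinj k (by omega) i hi.le h2
      omega
  have uniql : ∀ e ∈ wEdges m ρ' ∪ wEdges m' Q, ρ ℓ ∈ e →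
      ∀ e' ∈ wEdges m ρ' ∪ wEdges m' Q, ρ ℓ ∈ e' → e = e' := by
    have stepcase : ∀ i < ℓ, (ρ ℓ = ρ i ∨ ρ ℓ = ρ (i + 1)) → i = ℓ - 1 := by
      intro i hi hcase
      rcases hcase with hcc | hcc
      · have := hinj ℓ (by omega) i hi.le hcc
        omega
      · have := hinj ℓ (by omega) (i + 1) hi hcc
        omega
    have E_fA : s(ρ (ℓ - 1), ρ (ℓ - 1 + 1)) ∈ wEdges m ρ' ∪ wEdges m' Q →
        ρ ℓ ∈ s(w₀, w₁) → False := by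
      intro hstepmem hmem
      rw [Sym2.mem_iff] at hmem
      rcases hmem with h0 | h0
      · rw [← I1l h0] at hstepmem
        exact hEAnot hstepmem
      · rw [← I2l h0] at hstepmem
        exact hEBnot hstepmem
    have E_fB : s(ρ (ℓ - 1), ρ (ℓ - 1 + 1)) ∈ wEdges m ρ' ∪ wEdges m' Q →
        ρ ℓ ∈ s(ρ j, ρ k) → False := by
      intro hstepmem hmem
      rw [Sym2.mem_iff] at hmem
      rcases hmem with h0 | h0
      · have : j = ℓ := by
          have := hinj ℓ (by omega) j (by omega) h0
          omega
        omega
      · have hkl' : k = ℓ := by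
          have := hinj ℓ (by omega) k (by omega) h0
          omega
        rw [← I3l hkl'] at hstepmem
        exact hEBnot hstepmem
    intro e he hxe e' he' hxe'
    rcases cat (ρ ℓ) e he hxe with ⟨i, hi, rfl, hm, hsm⟩ | rfl | rfl <;>
      rcases cat (ρ ℓ) e' he' hxe' with ⟨i', hi', rfl, hm', hsm'⟩ | rfl | rfl
    · have e1 : i = ℓ - 1 := stepcase i hi hm
      have e2 : i' = ℓ - 1 := stepcase i' hi' hm'
      rw [e1, e2]
    · exfalso
      have e1 : i = ℓ - 1 := stepcase i hi hm
      rw [e1] at hsm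
      exact E_fA hsm hxe'
    · exfalso
      have e1 : i = ℓ - 1 := stepcase i hi hm
      rw [e1] at hsm
      exact E_fB hsm hxe'
    · exfalso
      have e1 : i' = ℓ - 1 := stepcase i' hi' hm'
      rw [e1] at hsm'
      exact E_fA hsm' hxe
    · rfl
    · exact absurd hxe' (fun hh => E_AB _ hxe hh)
    · exfalso
      have e1 : i' = ℓ - 1 := stepcase i' hi' hm'
      rw [e1] at hsm'
      exact E_fB hsm' hxe
    · exact absurd hxe (fun hh => E_AB _ hxe' hh)
    · rfl
  have notVQl : ρ ℓ ∉ wVerts m' Q := by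
    intro hmem
    obtain ⟨E1, E2, hE1, hE2, hne, hx1, hx2⟩ := twoedges _ hmem
    exact hne (uniql E1 (Or.inr hE1) hx1 E2 (Or.inr hE2) hx2)
  -- cover: every walk vertex belongs to the modification
  have cover : ∀ i ≤ ℓ, ρ i ∈ wVerts m ρ' ∪ wVerts m' Q := by
    intro i hi
    have main : ∀ t, t < ℓ → (ρ i = ρ t ∨ ρ i = ρ (t + 1)) →
        ρ i ∈ wVerts m ρ' ∪ wVerts m' Q := by
      intro t ht hcase
      by_cases h1 : s(ρ t, ρ (t + 1)) = s(w₀, ρ j)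
      · rcases Sym2.eq_iff.mp h1 with ⟨ha, hb⟩ | ⟨ha, hb⟩
        · rcases hcase with hc | hc
          · rw [hc, ha]; exact (coverE _ _ memRHS_fA).1
          · rw [hc, hb]; exact (coverE _ _ memRHS_fB).1
        · rcases hcase with hc | hc
          · rw [hc, ha]; exact (coverE _ _ memRHS_fB).1
          · rw [hc, hb]; exact (coverE _ _ memRHS_fA).1
      · by_cases h2 : s(ρ t, ρ (t + 1)) = s(w₁, ρ k)
        · rcases Sym2.eq_iff.mp h2 with ⟨ha, hb⟩ | ⟨ha, hb⟩
          · rcases hcase with hc | hc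
            · rw [hc, ha]; exact (coverE _ _ memRHS_fA).2
            · rw [hc, hb]; exact (coverE _ _ memRHS_fB).2
          · rcases hcase with hc | hc
            · rw [hc, ha]; exact (coverE _ _ memRHS_fB).2
            · rw [hc, hb]; exact (coverE _ _ memRHS_fA).2
        · have hmem := memRHS_step t ht h1 h2
          rcases hcase with hc | hc
          · rw [hc]; exact (coverE _ _ hmem).1
          · rw [hc]; exact (coverE _ _ hmem).2
    rcases Nat.lt_or_ge i ℓ with hil | hil
    · exact main i hil (Or.inl rfl)
    · have hieq : i = ℓ := by omega
      refine main (ℓ - 1) (by omega) (Or.inr ?_)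
      rw [show ℓ - 1 + 1 = ℓ by omega, hieq]
  -- the walk location of Q 0
  have hQ0ρ : Q 0 ∈ wVerts ℓ ρ := by
    have hmem : s(Q 0, Q 1) ∈ wEdges m ρ' ∪ wEdges m' Q := Or.inr ⟨0, by omega, rfl⟩
    exact (endρ _ _ hmem).1
  obtain ⟨t0, ht0l, ht0⟩ := hQ0ρ
  have hVQt0 : ρ t0 ∈ wVerts m' Q := by rw [ht0]; exact ⟨0, by omega, rfl⟩
  -- the positions of the removed edges
  obtain ⟨p, hpl, hpe⟩ := hA
  obtain ⟨q, hql, hqe⟩ := hB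
  have hpq : p ≠ q := by
    intro hE
    subst hE
    exact dAB (hpe.trans hqe.symm)
  have stepmem : ∀ u, u < ℓ → u ≠ p → u ≠ q →
      s(ρ u, ρ (u + 1)) ∈ wEdges m ρ' ∪ wEdges m' Q := by
    intro u hu h1 h2
    refine memRHS_step u hu ?_ ?_
    · intro hE
      exact h1 (edge_inj hinj hu hpl (hE.trans hpe))
    · intro hE
      exact h2 (edge_inj hinj hu hql (hE.trans hqe))
  have chain : ∀ i t : ℕ, i ≤ t → t ≤ ℓ → (∀ u, i ≤ u → u < t → u ≠ p ∧ u ≠ q) →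
      (ρ i ∈ wVerts m' Q ↔ ρ t ∈ wVerts m' Q) := by
    intro i t hit
    induction t, hit using Nat.le_induction with
    | base => intro _ _; exact Iff.rfl
    | succ t hit ih =>
      intro htl hcond
      have h1 := ih (by omega) (fun u hu hut => hcond u hu (by omega))
      have h2 := classE _ _ (stepmem t (by omega) (hcond t hit (by omega)).1
        (hcond t hit (by omega)).2)
      exact h1.trans h2
  rcases Sym2.eq_iff.mp hpe with ⟨hp1, hp2⟩ | ⟨hp1, hp2⟩ <;>
    rcases Sym2.eq_iff.mp hqe with ⟨hq1, hq2⟩ | ⟨hq1, hq2⟩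
  · -- p = j - 1 (outer), q = k - 1 (inner): everything is connected, contradiction
    exfalso
    have hpj : p + 1 = j := hinj (p + 1) hpl j (by omega) hp2.symm
    have hqk : q + 1 = k := hinj (q + 1) hql k (by omega) hq2.symm
    have lfA : (ρ p ∈ wVerts m' Q ↔ ρ q ∈ wVerts m' Q) := by
      have hiff := classE w₀ w₁ memRHS_fA
      rwa [hp1, hq1] at hiff
    have lfB : (ρ j ∈ wVerts m' Q ↔ ρ k ∈ wVerts m' Q) := classE _ _ memRHS_fB
    have c0p : (ρ 0 ∈ wVerts m' Q ↔ ρ p ∈ wVerts m' Q) :=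
      chain 0 p (by omega) (by omega) (fun t h1 h2 => ⟨by omega, by omega⟩)
    have hbad : ρ 0 ∈ wVerts m' Q ∨ ρ ℓ ∈ wVerts m' Q := by
      rcases le_or_gt t0 p with hcase | hcase
      · exact Or.inl (c0p.mpr ((chain t0 p hcase (by omega)
          (fun t h1 h2 => ⟨by omega, by omega⟩)).mp hVQt0))
      rcases le_or_gt t0 q with hcase' | hcase'
      · have hqmem := (chain t0 q hcase' (by omega)
          (fun t h1 h2 => ⟨by omega, by omega⟩)).mp hVQt0
        exact Or.inl (c0p.mpr (lfA.mpr hqmem))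
      · exact Or.inr ((chain t0 ℓ (by omega) (le_refl _)
          (fun t h1 h2 => ⟨by omega, by omega⟩)).mp hVQt0)
    rcases hbad with hh | hh
    · exact notVQ0 hh
    · exact notVQl hh
  · -- p = j - 1 (outer), q = k (outer): the good configuration
    have hpj : p + 1 = j := hinj (p + 1) hpl j (by omega) hp2.symm
    have hqk : q = k := hinj q hql.le k (by omega) hq2.symm
    have hj1 : 1 ≤ j := by omega
    have hkl1 : k + 1 ≤ ℓ := by omega
    have nJ : ρ (j - 1) = w₀ := by rw [show j - 1 = p by omega, ← hp1]
    have nK : ρ (k + 1) = w₁ := by rw [show k + 1 = q + 1 by omega, ← hq1]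
    have mid : ∀ u, j ≤ u → u ≤ k → (ρ j ∈ wVerts m' Q ↔ ρ u ∈ wVerts m' Q) :=
      fun u h1 h2 => chain j u h1 (by omega) (fun t ht1 ht2 => ⟨by omega, by omega⟩)
    have low : ∀ v, v < j → (ρ 0 ∈ wVerts m' Q ↔ ρ v ∈ wVerts m' Q) :=
      fun v hv => chain 0 v (by omega) (by omega) (fun t ht1 ht2 => ⟨by omega, by omega⟩)
    have high : ∀ v, k < v → v ≤ ℓ → (ρ v ∈ wVerts m' Q ↔ ρ ℓ ∈ wVerts m' Q) :=
      fun v h1 h2 => chain v ℓ h2 (le_refl _) (fun t ht1 ht2 => ⟨by omega, by omega⟩)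
    have hρjVQ : ρ j ∈ wVerts m' Q := by
      rcases Nat.lt_or_ge t0 j with hcase | hcase
      · exact absurd ((low t0 hcase).mpr hVQt0) notVQ0
      · rcases le_or_gt t0 k with hcase' | hcase'
        · exact (mid t0 hcase hcase').mpr hVQt0
        · exact absurd ((high t0 hcase' ht0l).mp hVQt0) notVQl
    have Tfact : ∀ u, j ≤ u → u ≤ k → ρ u ∈ wVerts m' Q :=
      fun u h1 h2 => (mid u h1 h2).mp hρjVQ
    have Vfact : ∀ v, v ≤ ℓ → (v < j ∨ k < v) → ρ v ∈ wVerts m ρ' := by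
      intro v hv hcase
      have hnot : ρ v ∉ wVerts m' Q := by
        intro hq'
        rcases hcase with hc | hc
        · exact notVQ0 ((low v hc).mpr hq')
        · exact notVQl ((high v hc hv).mp hq')
      rcases cover v hv with hh | hh
      · exact hh
      · exact absurd hh hnot
    refine ⟨hj1, hkl1, nJ, nK, ?_⟩
    intro u v hju huk hvl hcase hrow
    have hu := Tfact u hju huk
    have hv := Vfact v hvl hcase
    by_contra hge
    push_neg at hge
    have htz : ((((ρ v).1 - (ρ u).1).toNat : ℕ) : ℤ) = (ρ v).1 - (ρ u).1 :=
      Int.toNat_of_nonneg (by omega)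
    have himg : ρ u + (((((ρ v).1 - (ρ u).1).toNat : ℕ) : ℤ), 0) = ρ v := by
      rw [Prod.ext_iff]
      constructor
      · rw [Prod.fst_add, htz]; ring
      · rw [Prod.snd_add]; rw [hrow]; ring
    exact Set.disjoint_left.mp (htr ((ρ v).1 - (ρ u).1).toNat) ⟨ρ u, hu, himg⟩ hv
  · -- p = j (inner), q = k - 1 (inner): translate by one kills it
    exfalso
    have hpj : p = j := hinj p hpl.le j (by omega) hp2.symm
    have hqk : q + 1 = k := hinj (q + 1) hql k (by omega) hq2.symm
    have c0j : (ρ 0 ∈ wVerts m' Q ↔ ρ j ∈ wVerts m' Q) :=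
      chain 0 j (by omega) (by omega) (fun t h1 h2 => ⟨by omega, by omega⟩)
    have hmid : ρ (j + 1) ∈ wVerts m' Q := by
      rcases le_or_gt t0 j with hcase | hcase
      · exact absurd (c0j.mpr ((chain t0 j hcase (by omega)
          (fun t h1 h2 => ⟨by omega, by omega⟩)).mp hVQt0)) notVQ0
      rcases le_or_gt k t0 with hcase' | hcase'
      · exact absurd ((chain t0 ℓ (by omega) (le_refl _)
          (fun t h1 h2 => ⟨by omega, by omega⟩)).mp hVQt0) notVQl
      · exact (chain (j + 1) t0 (by omega) (by omega)
          (fun t h1 h2 => ⟨by omega, by omega⟩)).mpr hVQt0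
    have hρjnot : ρ j ∉ wVerts m' Q := fun hh => notVQ0 (c0j.mpr hh)
    have hρjV' : ρ j ∈ wVerts m ρ' := by
      rcases cover j (by omega) with hh | hh
      · exact hh
      · exact absurd hh hρjnot
    have hp1' : w₀ = ρ (j + 1) := by rw [← hpj]; exact hp1
    have himg : ρ (j + 1) + (((1 : ℕ) : ℤ), 0) = ρ j := by
      rw [← hp1']
      rw [Prod.ext_iff]
      constructor
      · rw [Prod.fst_add, c1]; norm_num
      · rw [Prod.snd_add, c2]; norm_num
    exact Set.disjoint_left.mp (htr 1) ⟨ρ (j + 1), hmid, himg⟩ hρjV'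
  · -- p = j (inner), q = k (outer): everything is connected, contradiction
    exfalso
    have hpj : p = j := hinj p hpl.le j (by omega) hp2.symm
    have hqk : q = k := hinj q hql.le k (by omega) hq2.symm
    have c0j : (ρ 0 ∈ wVerts m' Q ↔ ρ j ∈ wVerts m' Q) :=
      chain 0 j (by omega) (by omega) (fun t h1 h2 => ⟨by omega, by omega⟩)
    have lfB : (ρ j ∈ wVerts m' Q ↔ ρ k ∈ wVerts m' Q) := classE _ _ memRHS_fB
    have hbad : ρ 0 ∈ wVerts m' Q ∨ ρ ℓ ∈ wVerts m' Q := by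
      rcases le_or_gt t0 j with hcase | hcase
      · exact Or.inl (c0j.mpr ((chain t0 j hcase (by omega)
          (fun t h1 h2 => ⟨by omega, by omega⟩)).mp hVQt0))
      rcases le_or_gt t0 k with hcase' | hcase'
      · have hkmem := (chain t0 k hcase' (by omega)
          (fun t h1 h2 => ⟨by omega, by omega⟩)).mp hVQt0
        exact Or.inl (c0j.mpr (lfB.mpr hkmem))
      · exact Or.inr ((chain t0 ℓ (by omega) (le_refl _)
          (fun t h1 h2 => ⟨by omega, by omega⟩)).mp hVQt0)
    rcases hbad with hh | hh
    · exact notVQ0 hh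
    · exact notVQl hh

lemma partI (ℓ j k : ℕ) (ρ : ℕ → ℤ × ℤ) (hρ : IsSAWalk ℓ ρ)
    (hd : RightDetachable ℓ ρ j k) :
    1 ≤ j ∧ k + 1 ≤ ℓ ∧ ρ (j - 1) = ρ j + (-1, 0) ∧ ρ (k + 1) = ρ k + (-1, 0) ∧
      (ρ k).1 = (ρ j).1 ∧ ((ρ k).2 = (ρ j).2 + 1 ∨ (ρ k).2 = (ρ j).2 - 1) ∧
      ∀ u v : ℕ, j ≤ u → u ≤ k → v ≤ ℓ → (v < j ∨ k < v) → (ρ v).2 = (ρ u).2 →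
        (ρ v).1 < (ρ u).1 := by
  obtain ⟨hjk, hkl, a, hset, he₁, he₂, hf₁, hf₂, m, ρ', m', Q, hw, hpoly, hdisj, hEq, htr⟩ := hd
  have pairadd : ((0 : ℤ), (1 : ℤ)) + ((-1 : ℤ), (0 : ℤ)) = ((-1 : ℤ), (1 : ℤ)) := by
    norm_num [Prod.ext_iff]
  have hmemj : ρ j ∈ ({a, a + (0, 1)} : Set (ℤ × ℤ)) := by
    rw [← hset]; exact Or.inl rfl
  have hmemk : ρ k ∈ ({a, a + (0, 1)} : Set (ℤ × ℤ)) := by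
    rw [← hset]; exact Or.inr rfl
  simp only [Set.mem_insert_iff, Set.mem_singleton_iff] at hmemj hmemk
  have hnejk : ρ j ≠ ρ k := by
    intro hE
    have := hρ.2 j (by omega) k (by omega) hE
    omega
  have horient : (ρ j = a ∧ ρ k = a + (0, 1)) ∨ (ρ j = a + (0, 1) ∧ ρ k = a) := by
    rcases hmemj with h1 | h1 <;> rcases hmemk with h2 | h2
    · exact absurd (h1.trans h2.symm) hnejk
    · exact Or.inl ⟨h1, h2⟩
    · exact Or.inr ⟨h1, h2⟩
    · exact absurd (h1.trans h2.symm) hnejk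
  rcases horient with ⟨hj, hk⟩ | ⟨hj, hk⟩
  · -- ρ j is the bottom of the chord
    have eq1 : a = ρ j := hj.symm
    have eq2 : a + (0, 1) = ρ k := hk.symm
    have eq3 : a + (-1, 0) = ρ j + (-1, 0) := by rw [hj]
    have eq4 : a + (-1, 1) = ρ k + (-1, 0) := by
      rw [hk, add_assoc, pairadd]
    rw [eq3, eq1] at he₁
    rw [eq4, eq2] at he₂
    rw [eq3, eq4] at hf₁
    rw [eq2, eq1] at hf₂
    rw [eq3, eq4, eq2, eq1] at hEq
    have hx : (ρ k).1 = (ρ j).1 := by rw [← eq2, ← eq1]; simp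
    have hy : (ρ k).2 = (ρ j).2 + 1 := by rw [← eq2, ← eq1]; simp
    obtain ⟨r1, r2, r3, r4, r5⟩ := partICore ℓ j k m m' ρ ρ' Q hρ hw hpoly hjk hkl
      hx (Or.inl hy) he₁ he₂ hf₁ hf₂ hdisj hEq htr
    exact ⟨r1, r2, r3, r4, hx, Or.inl hy, r5⟩
  · -- ρ j is the top of the chord
    have eq1 : a = ρ k := hk.symm
    have eq2 : a + (0, 1) = ρ j := hj.symm
    have eq3 : a + (-1, 0) = ρ k + (-1, 0) := by rw [hk]
    have eq4 : a + (-1, 1) = ρ j + (-1, 0) := by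
      rw [hj, add_assoc, pairadd]
    rw [eq3, eq1] at he₁
    rw [eq4, eq2] at he₂
    rw [eq3, eq4] at hf₁
    rw [eq2, eq1] at hf₂
    rw [eq3, eq4, eq2, eq1] at hEq
    have swap1 : ({s(ρ k + (-1, 0), ρ k), s(ρ j + (-1, 0), ρ j)} : Set (Sym2 (ℤ × ℤ)))
        = {s(ρ j + (-1, 0), ρ j), s(ρ k + (-1, 0), ρ k)} := Set.pair_comm _ _
    have swap2 : s(ρ k + (-1, 0), ρ j + (-1, 0)) = s(ρ j + (-1, 0), ρ k + (-1, 0)) :=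
      Sym2.eq_swap
    have swap3 : s(ρ k, ρ j) = s(ρ j, ρ k) := Sym2.eq_swap
    rw [swap2] at hf₁
    rw [swap3] at hf₂
    rw [swap1, swap2, swap3] at hEq
    have hx : (ρ k).1 = (ρ j).1 := by rw [← eq2, ← eq1]; simp
    have hy : (ρ k).2 = (ρ j).2 - 1 := by rw [← eq2, ← eq1]; simp
    obtain ⟨r1, r2, r3, r4, r5⟩ := partICore ℓ j k m m' ρ ρ' Q hρ hw hpoly hjk hkl
      hx (Or.inr hy) he₂ he₁ hf₁ hf₂ hdisj hEq htr
    exact ⟨r1, r2, r3, r4, hx, Or.inr hy, r5⟩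

lemma partII (ℓ h : ℕ) (ρ : ℕ → ℤ × ℤ) (hρ : IsSAWalk ℓ ρ)
    (j₁ k₁ j₂ k₂ : ℕ)
    (h₁ : RightDetachable ℓ ρ j₁ k₁) (h₂ : RightDetachable ℓ ρ j₂ k₂)
    (hg₁ : k₁ - j₁ = h) (hg₂ : k₂ - j₂ = h)
    (hlt : k₁ < k₂) (hcon : k₂ - k₁ < h) : False := by
  have hjk1 : j₁ < k₁ := h₁.1
  have hjk2 : j₂ < k₂ := h₂.1
  obtain ⟨hj1, hk1l, n1, n2, hx1, hy1, R1⟩ := partI ℓ j₁ k₁ ρ hρ h₁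
  obtain ⟨hj2, hk2l, n3, n4, hx2, hy2, R2⟩ := partI ℓ j₂ k₂ ρ hρ h₂
  -- index ordering : j₁ < j₂ < k₁ < k₂
  have hjj : j₁ < j₂ := by omega
  have hj2k1 : j₂ < k₁ := by omega
  -- coordinates of the neighbours
  have e1a : (ρ (j₁ - 1)).1 = (ρ j₁).1 - 1 := by rw [n1, Prod.fst_add]; ring
  have e1b : (ρ (j₁ - 1)).2 = (ρ j₁).2 := by rw [n1, Prod.snd_add]; ring
  have e2a : (ρ (k₁ + 1)).1 = (ρ k₁).1 - 1 := by rw [n2, Prod.fst_add]; ring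
  have e2b : (ρ (k₁ + 1)).2 = (ρ k₁).2 := by rw [n2, Prod.snd_add]; ring
  have e3a : (ρ (j₂ - 1)).1 = (ρ j₂).1 - 1 := by rw [n3, Prod.fst_add]; ring
  have e3b : (ρ (j₂ - 1)).2 = (ρ j₂).2 := by rw [n3, Prod.snd_add]; ring
  have e4a : (ρ (k₂ + 1)).1 = (ρ k₂).1 - 1 := by rw [n4, Prod.fst_add]; ring
  have e4b : (ρ (k₂ + 1)).2 = (ρ k₂).2 := by rw [n4, Prod.snd_add]; ring
  -- avoidance facts
  have A1 : ∀ i, k₁ < i → i ≤ k₂ → (ρ i).2 ≠ (ρ j₂).2 := by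
    intro i hi1 hi2 hrow
    have hr1 := R1 (j₂ - 1) i (by omega) (by omega) (by omega) (Or.inr hi1)
      (by rw [e3b, hrow])
    have hr2 := R2 i (j₂ - 1) (by omega) (by omega) (by omega) (Or.inl (by omega))
      (by rw [e3b, hrow])
    omega
  have A2 : ∀ i, k₁ < i → i ≤ k₂ → (ρ i).2 ≠ (ρ j₁).2 := by
    intro i hi1 hi2 hrow
    have hr1 := R1 j₁ i (le_refl _) (by omega) (by omega) (Or.inr hi1) hrow
    have hr2 := R2 i (j₁ - 1) (by omega) (by omega) (by omega) (Or.inl (by omega))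
      (by rw [e1b, hrow])
    omega
  have A3 : ∀ i, j₁ ≤ i → i < j₂ → (ρ i).2 ≠ (ρ k₁).2 := by
    intro i hi1 hi2 hrow
    have hr1 := R2 (k₁ + 1) i (by omega) (by omega) (by omega) (Or.inl hi2)
      (by rw [hrow, e2b])
    have hr2 := R1 i (k₁ + 1) hi1 (by omega) (by omega) (Or.inr (by omega))
      (by rw [e2b, hrow])
    omega
  have A4 : ∀ i, j₁ ≤ i → i < j₂ → (ρ i).2 ≠ (ρ k₂).2 := by
    intro i hi1 hi2 hrow
    have hr1 := R1 i (k₂ + 1) hi1 (by omega) (by omega) (Or.inr (by omega))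
      (by rw [e4b, hrow])
    have hr2 := R2 k₂ i (by omega) (le_refl _) (by omega) (Or.inl hi2) hrow
    omega
  -- interval version of the discrete IVT
  have ivt' : ∀ i₁ i₂ : ℕ, i₁ ≤ i₂ → i₂ ≤ ℓ → ∀ r : ℤ,
      (((ρ i₁).2 ≤ r ∧ r ≤ (ρ i₂).2) ∨ ((ρ i₂).2 ≤ r ∧ r ≤ (ρ i₁).2)) →
      ∃ t, i₁ ≤ t ∧ t ≤ i₂ ∧ (ρ t).2 = r := by
    intro i₁ i₂ h12 h2l r hr
    have heq : i₁ + (i₂ - i₁) = i₂ := by omega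
    rw [← heq] at hr
    obtain ⟨t, ht1, ht2, ht3⟩ := ivt hρ.1 (i₂ - i₁) i₁ (by omega) r hr
    exact ⟨t, ht1, by omega, ht3⟩
  -- the four row constraints
  have c1 : ¬ (((ρ k₁).2 ≤ (ρ j₂).2 ∧ (ρ j₂).2 ≤ (ρ k₂).2) ∨
      ((ρ k₂).2 ≤ (ρ j₂).2 ∧ (ρ j₂).2 ≤ (ρ k₁).2)) := by
    intro hbet
    have hbet' : (((ρ (k₁ + 1)).2 ≤ (ρ j₂).2 ∧ (ρ j₂).2 ≤ (ρ k₂).2) ∨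
        ((ρ k₂).2 ≤ (ρ j₂).2 ∧ (ρ j₂).2 ≤ (ρ (k₁ + 1)).2)) := by rw [e2b]; exact hbet
    obtain ⟨t, ht1, ht2, ht3⟩ := ivt' (k₁ + 1) k₂ (by omega) (by omega) _ hbet'
    exact A1 t (by omega) ht2 ht3
  have c2 : ¬ (((ρ k₁).2 ≤ (ρ j₁).2 ∧ (ρ j₁).2 ≤ (ρ k₂).2) ∨
      ((ρ k₂).2 ≤ (ρ j₁).2 ∧ (ρ j₁).2 ≤ (ρ k₁).2)) := by
    intro hbet
    have hbet' : (((ρ (k₁ + 1)).2 ≤ (ρ j₁).2 ∧ (ρ j₁).2 ≤ (ρ k₂).2) ∨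
        ((ρ k₂).2 ≤ (ρ j₁).2 ∧ (ρ j₁).2 ≤ (ρ (k₁ + 1)).2)) := by rw [e2b]; exact hbet
    obtain ⟨t, ht1, ht2, ht3⟩ := ivt' (k₁ + 1) k₂ (by omega) (by omega) _ hbet'
    exact A2 t (by omega) ht2 ht3
  have c3 : ¬ (((ρ j₁).2 ≤ (ρ k₁).2 ∧ (ρ k₁).2 ≤ (ρ j₂).2) ∨
      ((ρ j₂).2 ≤ (ρ k₁).2 ∧ (ρ k₁).2 ≤ (ρ j₁).2)) := by
    intro hbet
    have hbet' : (((ρ j₁).2 ≤ (ρ k₁).2 ∧ (ρ k₁).2 ≤ (ρ (j₂ - 1)).2) ∨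
        ((ρ (j₂ - 1)).2 ≤ (ρ k₁).2 ∧ (ρ k₁).2 ≤ (ρ j₁).2)) := by rw [e3b]; exact hbet
    obtain ⟨t, ht1, ht2, ht3⟩ := ivt' j₁ (j₂ - 1) (by omega) (by omega) _ hbet'
    exact A3 t ht1 (by omega) ht3
  have c4 : ¬ (((ρ j₁).2 ≤ (ρ k₂).2 ∧ (ρ k₂).2 ≤ (ρ j₂).2) ∨
      ((ρ j₂).2 ≤ (ρ k₂).2 ∧ (ρ k₂).2 ≤ (ρ j₁).2)) := by
    intro hbet
    have hbet' : (((ρ j₁).2 ≤ (ρ k₂).2 ∧ (ρ k₂).2 ≤ (ρ (j₂ - 1)).2) ∨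
        ((ρ (j₂ - 1)).2 ≤ (ρ k₂).2 ∧ (ρ k₂).2 ≤ (ρ j₁).2)) := by rw [e3b]; exact hbet
    obtain ⟨t, ht1, ht2, ht3⟩ := ivt' j₁ (j₂ - 1) (by omega) (by omega) _ hbet'
    exact A4 t ht1 (by omega) ht3
  -- deduce that the two chords occupy the same pair of rows
  have hrowk : (ρ k₂).2 = (ρ k₁).2 := by
    rcases hy1 with hz1 | hz1 <;> rcases hy2 with hz2 | hz2 <;> omega
  have hrowj : (ρ j₁).2 = (ρ j₂).2 := by
    rcases hy1 with hz1 | hz1 <;> rcases hy2 with hz2 | hz2 <;> omega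
  -- final contradiction on first coordinates
  have X1 := R1 k₁ k₂ (by omega) (le_refl _) (by omega) (Or.inr hlt) hrowk
  have X2 := R2 j₂ j₁ (le_refl _) (by omega) (by omega) (Or.inl hjj) hrowj
  omega

end RDAux




/-- Two distinct right-detachable `ρ`-adjacencies of the same gap `h`, for a
self-avoiding walk attaining its minimal height at `ρ 0` and its maximal height at
`ρ ℓ`, have their upper indices at distance at least `h`. -/
theorem right_detachable_adjacencies_far_apart (ℓ h : ℕ) (ρ : ℕ → ℤ × ℤ)
    (hρ : IsSAWalk ℓ ρ)
    (hmin : ∀ i ≤ ℓ, (ρ 0).2 ≤ (ρ i).2) (hmax : ∀ i ≤ ℓ, (ρ i).2 ≤ (ρ ℓ).2)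
    (hh : 0 < h) (j₁ k₁ j₂ k₂ : ℕ)
    (h₁ : RightDetachable ℓ ρ j₁ k₁) (h₂ : RightDetachable ℓ ρ j₂ k₂)
    (hg₁ : k₁ - j₁ = h) (hg₂ : k₂ - j₂ = h)
    (hne : (j₁, k₁) ≠ (j₂, k₂)) :
    (h : ℤ) ≤ |(k₂ : ℤ) - (k₁ : ℤ)| := by
  rcases lt_trichotomy k₁ k₂ with hlt | heq | hlt
  · by_contra hcon
    push_neg at hcon
    have habs : |(k₂ : ℤ) - (k₁ : ℤ)| = (k₂ : ℤ) - (k₁ : ℤ) := abs_of_nonneg (by omega)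
    rw [habs] at hcon
    exact absurd (RDAux.partII ℓ h ρ hρ j₁ k₁ j₂ k₂ h₁ h₂ hg₁ hg₂ hlt (by omega)) not_false
  · exfalso
    have e1 := h₁.1
    have e2 := h₂.1
    have hj : j₁ = j₂ := by omega
    exact hne (by rw [hj, heq])
  · by_contra hcon
    push_neg at hcon
    have habs : |(k₂ : ℤ) - (k₁ : ℤ)| = (k₁ : ℤ) - (k₂ : ℤ) := by
      rw [abs_sub_comm]; exact abs_of_nonneg (by omega)
    rw [habs] at hcon
    exact absurd (RDAux.partII ℓ h ρ hρ j₂ k₂ j₁ k₁ h₂ h₁ hg₂ hg₁ hlt (by omega)) not_false
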